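/- There exists a positive real constant c such that the following holds. Let N ≥ 4 and k ≥ 2 be integers, and let F₁, F₂, …, F_N be families of lines in ℝ², each family consisting of exactly k pairwise parallel lines, such that no line of one family is parallel to a line of another family. Let P be the set of all points lying at the intersection of some line of F₁ with some line of F_j for some 2 ≤ j ≤ N. Then |P| ≥ c · k² · N^{1/2}. -/

import Mathlib

noncomputable section

/-- Points of the real plane. -/
abbrev Pt := ℝ × ℝ

/-- Lines are affine subspaces of the plane (we restrict to 1-dimensional ones via `IsLine`). -/
abbrev Ln := AffineSubspace ℝ Pt

/-- A line is a 1-dimensional affine subspace of `ℝ²`. -/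
def IsLine (l : Ln) : Prop := Module.finrank ℝ l.direction = 1

/-- The line through two (distinct) points. -/
def lineThrough (p q : Pt) : Ln := affineSpan ℝ {p, q}

/-- The iterated point–line construction: `P 1` is a set of four points in general position,
`L 1` is the set of lines through pairs of them; `P (k+1)` adds all intersection points of
pairs of distinct lines of `L k`, and `L (k+1)` adds all lines through pairs of distinct
points of `P (k+1)`.  No two distinct lines of any `L k` are parallel. -/
structure IterConfig where
  P : ℕ → Set Pt
  L : ℕ → Set Ln
  card_P1 : (P 1).ncard = 4
  genPos : ∀ p ∈ P 1, ∀ q ∈ P 1, ∀ r ∈ P 1,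
    p ≠ q → p ≠ r → q ≠ r → ¬ Collinear ℝ ({p, q, r} : Set Pt)
  L1_def : L 1 = {l | ∃ p ∈ P 1, ∃ q ∈ P 1, p ≠ q ∧ l = lineThrough p q}
  P_succ : ∀ k, 1 ≤ k →
    P (k + 1) = P k ∪ {x | ∃ l ∈ L k, ∃ l' ∈ L k, l ≠ l' ∧ x ∈ l ∧ x ∈ l'}
  L_succ : ∀ k, 1 ≤ k →
    L (k + 1) = L k ∪ {l | ∃ p ∈ P (k + 1), ∃ q ∈ P (k + 1), p ≠ q ∧ l = lineThrough p q}
  noParallel : ∀ k, 1 ≤ k → ∀ l ∈ L k, ∀ l' ∈ L k, l ≠ l' →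
    AffineSubspace.direction l ≠ AffineSubspace.direction l'

/-- `n k`, the number of points at the beginning of stage `k`. -/
def nPts (C : IterConfig) (k : ℕ) : ℕ := (C.P k).ncard

/-- `m k`, the number of lines at the beginning of stage `k`. -/
def nLns (C : IterConfig) (k : ℕ) : ℕ := (C.L k).ncard

/-- `d k p`, the degree of a point: the number of lines of `L k` incident to `p`. -/
def ptDeg (C : IterConfig) (k : ℕ) (p : Pt) : ℕ := {l | l ∈ C.L k ∧ p ∈ l}.ncard

/-- `δ k`, the minimum degree of a point of `P k`. -/
def minDeg (C : IterConfig) (k : ℕ) : ℕ := sInf {d | ∃ p ∈ C.P k, d = ptDeg C k p}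

open Finset
open scoped Classical

lemma chain_bound (E : Finset (ℝ × ℝ))
    (h : ∀ e ∈ E, ∀ e' ∈ E, 0 ≤ (e.1 - e'.1) * (e.2 - e'.2)) :
    E.card ≤ (E.image Prod.fst).card + (E.image Prod.snd).card := by
  induction E using Finset.strongInduction with
  | _ E ih =>
    rcases E.eq_empty_or_nonempty with rfl | hne
    · simp
    obtain ⟨m, hm, hmax⟩ := E.exists_maximal hne
    -- every element is ≤ m componentwise
    have hle : ∀ e ∈ E, e.1 ≤ m.1 ∧ e.2 ≤ m.2 := by
      intro e he
      by_contra hc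
      push_neg at hc
      have h1 := h e he m hm
      suffices hlt : m < e from (not_le_of_gt hlt) (hmax he hlt.le)
      rcases le_or_gt e.1 m.1 with h1' | h1'
      · have h2' := hc h1'
        have : m.1 ≤ e.1 := by nlinarith
        exact Prod.lt_iff.2 (Or.inr ⟨this.antisymm h1' ▸ le_rfl, h2'⟩)
      · have : m.2 ≤ e.2 := by nlinarith
        exact Prod.lt_iff.2 (Or.inl ⟨h1', this⟩)
    set E' := E.erase m with hE'
    have hEins : E = insert m E' := (Finset.insert_erase hm).symm
    have hmE' : m ∉ E' := Finset.notMem_erase _ _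
    have hsub : ∀ e ∈ E', e ∈ E := fun e he => Finset.mem_of_mem_erase he
    have hkey : ¬ (m.1 ∈ E'.image Prod.fst ∧ m.2 ∈ E'.image Prod.snd) := by
      rintro ⟨h1, h2⟩
      obtain ⟨e, he, he1⟩ := Finset.mem_image.1 h1
      obtain ⟨e', he', he2⟩ := Finset.mem_image.1 h2
      have hem := hle e (hsub e he)
      have he'm := hle e' (hsub e' he')
      have hne1 : e ≠ m := Finset.ne_of_mem_erase he
      have hne2 : e' ≠ m := Finset.ne_of_mem_erase he'
      have he2lt : e.2 < m.2 := by
        rcases lt_or_eq_of_le hem.2 with h | h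
        · exact h
        · exact absurd (Prod.ext he1 h) hne1
      have he'1lt : e'.1 < m.1 := by
        rcases lt_or_eq_of_le he'm.1 with h | h
        · exact h
        · exact absurd (Prod.ext h he2) hne2
      have := h e (hsub e he) e' (hsub e' he')
      rw [he1, he2] at this
      nlinarith
    have hssub : E' ⊂ E := Finset.erase_ssubset hm
    have ihE' := ih E' hssub (fun e he e' he' => h e (hsub e he) e' (hsub e' he'))
    have hcard : E.card = E'.card + 1 := by
      rw [hEins, Finset.card_insert_of_notMem hmE']
    have himf : E.image Prod.fst = insert m.1 (E'.image Prod.fst) := by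
      rw [hEins, Finset.image_insert]
    have hims : E.image Prod.snd = insert m.2 (E'.image Prod.snd) := by
      rw [hEins, Finset.image_insert]
    rcases not_and_or.1 hkey with hk | hk
    · have : (E.image Prod.fst).card = (E'.image Prod.fst).card + 1 := by
        rw [himf, Finset.card_insert_of_notMem hk]
      have h2 : (E'.image Prod.snd).card ≤ (E.image Prod.snd).card := by
        apply Finset.card_le_card
        rw [hims]; exact Finset.subset_insert _ _
      omega
    · have : (E.image Prod.snd).card = (E'.image Prod.snd).card + 1 := by
        rw [hims, Finset.card_insert_of_notMem hk]
      have h2 : (E'.image Prod.fst).card ≤ (E.image Prod.fst).card := by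
        apply Finset.card_le_card
        rw [himf]; exact Finset.subset_insert _ _
      omega

noncomputable def invP (E : Finset (ℝ × ℝ)) : Finset ((ℝ × ℝ) × (ℝ × ℝ)) :=
  (E ×ˢ E).filter fun z => (z.1.1 - z.2.1) * (z.1.2 - z.2.2) < 0

lemma oneSlab (E : Finset (ℝ × ℝ)) :
    2 * E.card ≤ 2 * (E.image Prod.fst).card + 2 * (E.image Prod.snd).card
      + (invP E).card := by
  induction E using Finset.strongInduction with
  | _ E ih =>
    by_cases hch : ∀ e ∈ E, ∀ e' ∈ E, 0 ≤ (e.1 - e'.1) * (e.2 - e'.2)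
    · have := chain_bound E hch
      omega
    push_neg at hch
    obtain ⟨e₀, he₀, e₁, he₁, hinv⟩ := hch
    have hne : e₀ ≠ e₁ := by
      rintro rfl; nlinarith
    set E' := E.erase e₀ with hE'
    have hssub : E' ⊂ E := Finset.erase_ssubset he₀
    have hsub : E' ⊆ E := Finset.erase_subset _ _
    have ihE' := ih E' hssub
    have hcard : E.card = E'.card + 1 := by
      rw [hE', Finset.card_erase_of_mem he₀]
      have := Finset.card_pos.2 ⟨e₀, he₀⟩
      omega
    -- invP E' ⊆ invP E minus the two pairs (e₀,e₁),(e₁,e₀)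
    have h01 : (e₀, e₁) ∈ invP E := by
      simp [invP, Finset.mem_filter, Finset.mem_product, he₀, he₁, hinv]
    have h10 : (e₁, e₀) ∈ invP E := by
      simp only [invP, Finset.mem_filter, Finset.mem_product]
      refine ⟨⟨he₁, he₀⟩, ?_⟩; nlinarith
    have hsubinv : invP E' ⊆ ((invP E).erase (e₀, e₁)).erase (e₁, e₀) := by
      intro z hz
      simp only [invP, Finset.mem_filter, Finset.mem_product] at hz
      have hz1 : z.1 ∈ E' := hz.1.1
      have hz2 : z.2 ∈ E' := hz.1.2
      have hz1' : z.1 ≠ e₀ := Finset.ne_of_mem_erase hz1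
      have hz2' : z.2 ≠ e₀ := Finset.ne_of_mem_erase hz2
      apply Finset.mem_erase.2
      constructor
      · intro hzz; apply hz2'; rw [hzz]
      refine Finset.mem_erase.2 ⟨?_, ?_⟩
      · intro hzz; apply hz1'; rw [hzz]
      simp only [invP, Finset.mem_filter, Finset.mem_product]
      exact ⟨⟨hsub hz1, hsub hz2⟩, hz.2⟩
    have hinvcard : (invP E').card + 2 ≤ (invP E).card := by
      have h1 : (invP E').card ≤ (((invP E).erase (e₀, e₁)).erase (e₁, e₀)).card :=
        Finset.card_le_card hsubinv
      have h2 : (e₁, e₀) ∈ (invP E).erase (e₀, e₁) := by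
        refine Finset.mem_erase.2 ⟨?_, h10⟩
        intro hzz
        apply hne
        exact congrArg Prod.snd hzz
      rw [Finset.card_erase_of_mem h2, Finset.card_erase_of_mem h01] at h1
      have h5 : 1 ≤ ((invP E).erase (e₀, e₁)).card := Finset.card_pos.2 ⟨_, h2⟩
      have h6 : ((invP E).erase (e₀, e₁)).card = (invP E).card - 1 :=
        Finset.card_erase_of_mem h01
      omega
    have himf : (E'.image Prod.fst).card ≤ (E.image Prod.fst).card :=
      Finset.card_le_card (Finset.image_subset_image hsub)
    have hims : (E'.image Prod.snd).card ≤ (E.image Prod.snd).card :=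
      Finset.card_le_card (Finset.image_subset_image hsub)
    calc 2 * E.card = 2 * E'.card + 2 := by linarith
      _ ≤ (2 * (E'.image Prod.fst).card + 2 * (E'.image Prod.snd).card + (invP E').card) + 2 :=
          by linarith
      _ ≤ 2 * (E.image Prod.fst).card + 2 * (E.image Prod.snd).card + (invP E).card := by omega

namespace STCore

variable (k : ℕ) (c : ℕ → ℝ) (Λ : Finset (ℝ × ℝ))

noncomputable def ycd (l : ℝ × ℝ) (i : ℕ) : ℝ := l.1 * c i + l.2

noncomputable def colA (i : ℕ) : Finset ℝ := Λ.image (fun l => ycd c l i)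

noncomputable def Vfin : Finset (ℕ × ℝ) :=
  (Finset.range k).biUnion fun i => (colA c Λ i).image fun t => (i, t)

noncomputable def ECount (S : Finset (ℕ × ℝ)) : ℕ :=
  ∑ i ∈ Finset.range (k - 1),
    (Λ.filter fun l => (i, ycd c l i) ∈ S ∧ (i + 1, ycd c l (i + 1)) ∈ S).card

noncomputable def XCount (S : Finset (ℕ × ℝ)) : ℕ :=
  ∑ i ∈ Finset.range (k - 1),
    ((Λ ×ˢ Λ).filter fun z =>
      ((ycd c z.1 i - ycd c z.2 i) * (ycd c z.1 (i + 1) - ycd c z.2 (i + 1)) < 0) ∧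
      (i, ycd c z.1 i) ∈ S ∧ (i, ycd c z.2 i) ∈ S ∧
      (i + 1, ycd c z.1 (i + 1)) ∈ S ∧ (i + 1, ycd c z.2 (i + 1)) ∈ S).card

noncomputable def Xtot : ℕ :=
  ∑ i ∈ Finset.range (k - 1),
    ((Λ ×ˢ Λ).filter fun z =>
      (ycd c z.1 i - ycd c z.2 i) * (ycd c z.1 (i + 1) - ycd c z.2 (i + 1)) < 0).card

/-- sums of cards of fibers of the first coordinate are at most the total card -/
lemma sum_filter_fst_le (S : Finset (ℕ × ℝ)) (m : ℕ) (g : ℕ → ℕ)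
    (hg : ∀ a b, g a = g b → a = b) :
    ∑ i ∈ Finset.range m, (S.filter fun v => v.1 = g i).card ≤ S.card := by
  rw [← Finset.card_biUnion]
  · exact Finset.card_le_card (Finset.biUnion_subset.2 fun i _ => Finset.filter_subset _ _)
  · intro a _ b _ hab
    rw [Function.onFun, Finset.disjoint_left]
    intro v hv1 hv2
    simp only [Finset.mem_filter] at hv1 hv2
    exact hab (hg a b (hv1.2.symm ▸ hv2.2))

/-- KEY1 : deterministic crossing inequality for any vertex subset -/
lemma key1 (hc : ∀ i j, i < j → j < k → c i < c j) (S : Finset (ℕ × ℝ)) :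
    2 * ECount k c Λ S ≤ 4 * S.card + XCount k c Λ S := by
  have hslab : ∀ i ∈ Finset.range (k - 1),
      2 * (Λ.filter fun l => (i, ycd c l i) ∈ S ∧ (i + 1, ycd c l (i + 1)) ∈ S).card ≤
      2 * ((S.filter fun v => v.1 = i).card + (S.filter fun v => v.1 = i + 1).card) +
      ((Λ ×ˢ Λ).filter fun z =>
        ((ycd c z.1 i - ycd c z.2 i) * (ycd c z.1 (i + 1) - ycd c z.2 (i + 1)) < 0) ∧
        (i, ycd c z.1 i) ∈ S ∧ (i, ycd c z.2 i) ∈ S ∧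
        (i + 1, ycd c z.1 (i + 1)) ∈ S ∧ (i + 1, ycd c z.2 (i + 1)) ∈ S).card := by
    intro i hi
    simp only [Finset.mem_range] at hi
    have hii : c i < c (i + 1) := hc i (i + 1) (by omega) (by omega)
    set Λi := Λ.filter fun l => (i, ycd c l i) ∈ S ∧ (i + 1, ycd c l (i + 1)) ∈ S with hΛi
    set f : (ℝ × ℝ) → (ℝ × ℝ) := fun l => (ycd c l i, ycd c l (i + 1)) with hf
    have hfinj : ∀ a b : ℝ × ℝ, f a = f b → a = b := by
      intro a b hab
      have h1 : a.1 * c i + a.2 = b.1 * c i + b.2 := congrArg Prod.fst hab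
      have h2 : a.1 * c (i+1) + a.2 = b.1 * c (i+1) + b.2 := congrArg Prod.snd hab
      have ha : a.1 = b.1 := by
        have h3 : (a.1 - b.1) * (c i - c (i+1)) = 0 := by linear_combination h1 - h2
        rcases mul_eq_zero.1 h3 with h | h
        · have := sub_eq_zero.1 h; linarith
        · exact absurd (sub_eq_zero.1 h) (ne_of_lt hii)
      refine Prod.ext ha ?_
      have : a.1 * c i = b.1 * c i := by rw [ha]
      linarith
    set E := Λi.image f with hE
    have hcardE : E.card = Λi.card := Finset.card_image_of_injective _ (fun a b => hfinj a b)
    have h1 := oneSlab E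
    -- fst image bound
    have hfst : (E.image Prod.fst).card ≤ (S.filter fun v => v.1 = i).card := by
      have hsub : E.image Prod.fst ⊆ (S.filter fun v => v.1 = i).image Prod.snd := by
        intro t ht
        simp only [Finset.mem_image] at ht
        obtain ⟨e, he, rfl⟩ := ht
        simp only [hE, Finset.mem_image] at he
        obtain ⟨l, hl, rfl⟩ := he
        simp only [hΛi, Finset.mem_filter] at hl
        exact Finset.mem_image.2 ⟨(i, ycd c l i), Finset.mem_filter.2 ⟨hl.2.1, rfl⟩, rfl⟩
      exact (Finset.card_le_card hsub).trans (Finset.card_image_le)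
    have hsnd : (E.image Prod.snd).card ≤ (S.filter fun v => v.1 = i + 1).card := by
      have hsub : E.image Prod.snd ⊆ (S.filter fun v => v.1 = i + 1).image Prod.snd := by
        intro t ht
        simp only [Finset.mem_image] at ht
        obtain ⟨e, he, rfl⟩ := ht
        simp only [hE, Finset.mem_image] at he
        obtain ⟨l, hl, rfl⟩ := he
        simp only [hΛi, Finset.mem_filter] at hl
        exact Finset.mem_image.2 ⟨(i + 1, ycd c l (i+1)), Finset.mem_filter.2 ⟨hl.2.2, rfl⟩, rfl⟩
      exact (Finset.card_le_card hsub).trans (Finset.card_image_le)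
    -- inversion pairs bound
    have hinv : (invP E).card ≤ ((Λ ×ˢ Λ).filter fun z =>
        ((ycd c z.1 i - ycd c z.2 i) * (ycd c z.1 (i + 1) - ycd c z.2 (i + 1)) < 0) ∧
        (i, ycd c z.1 i) ∈ S ∧ (i, ycd c z.2 i) ∈ S ∧
        (i + 1, ycd c z.1 (i + 1)) ∈ S ∧ (i + 1, ycd c z.2 (i + 1)) ∈ S).card := by
      have hsub : invP E ⊆ (((Λ ×ˢ Λ).filter fun z =>
          ((ycd c z.1 i - ycd c z.2 i) * (ycd c z.1 (i + 1) - ycd c z.2 (i + 1)) < 0) ∧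
          (i, ycd c z.1 i) ∈ S ∧ (i, ycd c z.2 i) ∈ S ∧
          (i + 1, ycd c z.1 (i + 1)) ∈ S ∧ (i + 1, ycd c z.2 (i + 1)) ∈ S)).image
            (fun z => (f z.1, f z.2)) := by
        rintro ⟨z1, z2⟩ hz
        simp only [invP, Finset.mem_filter, Finset.mem_product] at hz
        obtain ⟨⟨hz1, hz2⟩, hzlt⟩ := hz
        simp only [hE, Finset.mem_image] at hz1 hz2
        obtain ⟨l1, hl1, rfl⟩ := hz1
        obtain ⟨l2, hl2, rfl⟩ := hz2
        simp only [hΛi, Finset.mem_filter] at hl1 hl2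
        refine Finset.mem_image.2 ⟨(l1, l2), Finset.mem_filter.2 ⟨?_, ?_⟩, rfl⟩
        · exact Finset.mem_product.2 ⟨hl1.1, hl2.1⟩
        refine ⟨?_, hl1.2.1, hl2.2.1, hl1.2.2, hl2.2.2⟩
        simpa [hf] using hzlt
      exact (Finset.card_le_card hsub).trans Finset.card_image_le
    calc 2 * Λi.card = 2 * E.card := by rw [hcardE]
      _ ≤ 2 * (E.image Prod.fst).card + 2 * (E.image Prod.snd).card + (invP E).card := h1
      _ ≤ _ := by omega
  calc 2 * ECount k c Λ S = ∑ i ∈ Finset.range (k - 1),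
        2 * (Λ.filter fun l => (i, ycd c l i) ∈ S ∧ (i + 1, ycd c l (i + 1)) ∈ S).card := by
        rw [ECount, Finset.mul_sum]
    _ ≤ ∑ i ∈ Finset.range (k - 1),
        (2 * ((S.filter fun v => v.1 = i).card + (S.filter fun v => v.1 = i + 1).card) +
        ((Λ ×ˢ Λ).filter fun z =>
          ((ycd c z.1 i - ycd c z.2 i) * (ycd c z.1 (i + 1) - ycd c z.2 (i + 1)) < 0) ∧
          (i, ycd c z.1 i) ∈ S ∧ (i, ycd c z.2 i) ∈ S ∧
          (i + 1, ycd c z.1 (i + 1)) ∈ S ∧ (i + 1, ycd c z.2 (i + 1)) ∈ S).card) :=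
        Finset.sum_le_sum hslab
    _ ≤ 4 * S.card + XCount k c Λ S := by
        rw [Finset.sum_add_distrib]
        have h2 : ∑ i ∈ Finset.range (k-1),
            2 * ((S.filter fun v => v.1 = i).card + (S.filter fun v => v.1 = i + 1).card)
            ≤ 4 * S.card := by
          have ha : ∑ i ∈ Finset.range (k-1), (S.filter fun v => v.1 = i).card ≤ S.card := by
            simpa using sum_filter_fst_le S (k-1) id (fun a b h => h)
          have hb : ∑ i ∈ Finset.range (k-1), (S.filter fun v => v.1 = i + 1).card ≤ S.card := by
            simpa using sum_filter_fst_le S (k-1) (· + 1) (fun a b h => Nat.succ_injective h)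
          calc ∑ i ∈ Finset.range (k-1),
              2 * ((S.filter fun v => v.1 = i).card + (S.filter fun v => v.1 = i + 1).card)
              = 2 * ((∑ i ∈ Finset.range (k-1), (S.filter fun v => v.1 = i).card)
                + ∑ i ∈ Finset.range (k-1), (S.filter fun v => v.1 = i + 1).card) := by
                rw [← Finset.sum_add_distrib, ← Finset.mul_sum]
            _ ≤ 4 * S.card := by omega
        rw [XCount]
        omega


lemma sumpq (p q : ℝ) (U : Finset (ℕ × ℝ)) :
    ∑ S ∈ U.powerset, p ^ S.card * q ^ (U.card - S.card) = (p + q) ^ U.card := by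
  calc ∑ S ∈ U.powerset, p ^ S.card * q ^ (U.card - S.card)
      = ∑ S ∈ U.powerset, (∏ _i ∈ S, p) * ∏ _i ∈ U \ S, q := by
        apply Finset.sum_congr rfl
        intro S hS
        rw [Finset.prod_const, Finset.prod_const, Finset.card_sdiff_of_subset (Finset.mem_powerset.1 hS)]
    _ = ∏ _i ∈ U, (p + q) := (Finset.prod_add _ _ _).symm
    _ = (p + q) ^ U.card := by rw [Finset.prod_const]

lemma subsetw (p q : ℝ) (hpq : p + q = 1) (V T : Finset (ℕ × ℝ)) (hT : T ⊆ V) :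
    ∑ S ∈ V.powerset, (if T ⊆ S then p ^ S.card * q ^ (V.card - S.card) else 0)
      = p ^ T.card := by
  rw [← Finset.sum_filter]
  have hbij : ∑ S ∈ (V.powerset).filter (fun S => T ⊆ S),
      p ^ S.card * q ^ (V.card - S.card)
      = ∑ S' ∈ (V \ T).powerset, p ^ (S'.card + T.card) * q ^ (V.card - (S'.card + T.card)) := by
    apply Finset.sum_nbij' (fun S => S \ T) (fun S' => S' ∪ T)
    · intro S hS
      simp only [Finset.mem_filter, Finset.mem_powerset] at hS
      exact Finset.mem_powerset.2 (Finset.sdiff_subset_sdiff hS.1 le_rfl)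
    · intro S' hS'
      simp only [Finset.mem_powerset] at hS'
      refine Finset.mem_filter.2 ⟨Finset.mem_powerset.2 ?_, Finset.subset_union_right⟩
      exact Finset.union_subset ((hS'.trans (Finset.sdiff_subset))) hT
    · intro S hS
      simp only [Finset.mem_filter, Finset.mem_powerset] at hS
      exact Finset.sdiff_union_of_subset hS.2
    · intro S' hS'
      simp only [Finset.mem_powerset] at hS'
      have hdisj : Disjoint S' T := Finset.disjoint_of_subset_left hS' (Finset.sdiff_disjoint)
      rw [Finset.union_sdiff_cancel_right hdisj]
    · intro S hS
      simp only [Finset.mem_filter, Finset.mem_powerset] at hS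
      have : (S \ T).card + T.card = S.card := by
        rw [Finset.card_sdiff_add_card_eq_card hS.2]
      rw [this]
  rw [hbij]
  have hVT : (V \ T).card = V.card - T.card := Finset.card_sdiff_of_subset hT
  have hTV : T.card ≤ V.card := Finset.card_le_card hT
  calc ∑ S' ∈ (V \ T).powerset, p ^ (S'.card + T.card) * q ^ (V.card - (S'.card + T.card))
      = ∑ S' ∈ (V \ T).powerset, p ^ T.card * (p ^ S'.card * q ^ ((V \ T).card - S'.card)) := by
        apply Finset.sum_congr rfl
        intro S' hS'
        have hS'c : S'.card ≤ (V \ T).card := Finset.card_le_card (Finset.mem_powerset.1 hS')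
        rw [pow_add]
        have : V.card - (S'.card + T.card) = (V \ T).card - S'.card := by omega
        rw [this]; ring
    _ = p ^ T.card * ((p + q) ^ (V \ T).card) := by rw [← Finset.mul_sum, sumpq]
    _ = p ^ T.card := by rw [hpq, one_pow, mul_one]

lemma mem_Vfin {l : ℝ × ℝ} (hl : l ∈ Λ) {i : ℕ} (hik : i < k) :
    (i, ycd c l i) ∈ Vfin k c Λ :=
  Finset.mem_biUnion.2 ⟨i, Finset.mem_range.2 hik,
    Finset.mem_image.2 ⟨ycd c l i, Finset.mem_image.2 ⟨l, hl, rfl⟩, rfl⟩⟩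

lemma sumE (p q : ℝ) (hpq : p + q = 1) :
    ∑ S ∈ (Vfin k c Λ).powerset,
      (p ^ S.card * q ^ ((Vfin k c Λ).card - S.card)) * (ECount k c Λ S : ℝ)
      = ((k - 1) * Λ.card : ℕ) * p ^ 2 := by
  set V := Vfin k c Λ with hV
  have hcast : ∀ S : Finset (ℕ × ℝ), ((ECount k c Λ S : ℕ) : ℝ) =
      ∑ i ∈ Finset.range (k - 1), ∑ l ∈ Λ,
        (if (i, ycd c l i) ∈ S ∧ (i + 1, ycd c l (i + 1)) ∈ S then (1 : ℝ) else 0) := by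
    intro S
    simp only [ECount, Finset.card_filter]
    push_cast
    rfl
  calc ∑ S ∈ V.powerset, (p ^ S.card * q ^ (V.card - S.card)) * (ECount k c Λ S : ℝ)
      = ∑ S ∈ V.powerset, ∑ i ∈ Finset.range (k - 1), ∑ l ∈ Λ,
          (p ^ S.card * q ^ (V.card - S.card)) *
          (if (i, ycd c l i) ∈ S ∧ (i + 1, ycd c l (i + 1)) ∈ S then (1 : ℝ) else 0) := by
        apply Finset.sum_congr rfl
        intro S _
        rw [hcast, Finset.mul_sum]
        exact Finset.sum_congr rfl fun i _ => by rw [Finset.mul_sum]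
    _ = ∑ i ∈ Finset.range (k - 1), ∑ l ∈ Λ, ∑ S ∈ V.powerset,
          (p ^ S.card * q ^ (V.card - S.card)) *
          (if (i, ycd c l i) ∈ S ∧ (i + 1, ycd c l (i + 1)) ∈ S then (1 : ℝ) else 0) := by
        rw [Finset.sum_comm]
        exact Finset.sum_congr rfl fun i _ => Finset.sum_comm
    _ = ∑ i ∈ Finset.range (k - 1), ∑ l ∈ Λ, p ^ 2 := by
        apply Finset.sum_congr rfl
        intro i hi
        apply Finset.sum_congr rfl
        intro l hl
        simp only [Finset.mem_range] at hi
        set T : Finset (ℕ × ℝ) := {(i, ycd c l i), (i + 1, ycd c l (i + 1))} with hT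
        have hTV : T ⊆ V := by
          intro v hv
          simp only [hT, Finset.mem_insert, Finset.mem_singleton] at hv
          rcases hv with rfl | rfl
          · exact mem_Vfin k c Λ hl (by omega)
          · exact mem_Vfin k c Λ hl (by omega)
        have hTcard : T.card = 2 := by
          rw [hT, Finset.card_insert_of_notMem, Finset.card_singleton]
          simp only [Finset.mem_singleton]
          intro h
          exact absurd (congrArg Prod.fst h) (by simp)
        calc ∑ S ∈ V.powerset, (p ^ S.card * q ^ (V.card - S.card)) *
              (if (i, ycd c l i) ∈ S ∧ (i + 1, ycd c l (i + 1)) ∈ S then (1 : ℝ) else 0)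
            = ∑ S ∈ V.powerset,
              (if T ⊆ S then p ^ S.card * q ^ (V.card - S.card) else 0) := by
              apply Finset.sum_congr rfl
              intro S _
              have hiff : ((i, ycd c l i) ∈ S ∧ (i + 1, ycd c l (i + 1)) ∈ S) ↔ T ⊆ S := by
                rw [hT, Finset.insert_subset_iff, Finset.singleton_subset_iff]
              by_cases hcond : (i, ycd c l i) ∈ S ∧ (i + 1, ycd c l (i + 1)) ∈ S
              · rw [if_pos hcond, if_pos (hiff.1 hcond), mul_one]
              · rw [if_neg hcond, if_neg (fun h => hcond (hiff.2 h)), mul_zero]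
          _ = p ^ T.card := subsetw p q hpq V T hTV
          _ = p ^ 2 := by rw [hTcard]
    _ = ((k - 1) * Λ.card : ℕ) * p ^ 2 := by
        simp [Finset.sum_const, Finset.card_range, nsmul_eq_mul]
        push_cast
        ring

lemma sumCard (p q : ℝ) (hpq : p + q = 1) :
    ∑ S ∈ (Vfin k c Λ).powerset,
      (p ^ S.card * q ^ ((Vfin k c Λ).card - S.card)) * (S.card : ℝ)
      = ((Vfin k c Λ).card : ℝ) * p := by
  set V := Vfin k c Λ with hV
  have hcast : ∀ S ∈ V.powerset, ((S.card : ℕ) : ℝ) =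
      ∑ v ∈ V, (if v ∈ S then (1 : ℝ) else 0) := by
    intro S hS
    have h0 : V.filter (fun v => v ∈ S) = S := by
      rw [Finset.filter_mem_eq_inter, Finset.inter_eq_right.2 (Finset.mem_powerset.1 hS)]
    have h1 : (V.filter (fun v => v ∈ S)).card = S.card := by rw [h0]
    rw [← h1]
    simp only [Finset.card_filter]
    push_cast
    rfl
  calc ∑ S ∈ V.powerset, (p ^ S.card * q ^ (V.card - S.card)) * (S.card : ℝ)
      = ∑ S ∈ V.powerset, ∑ v ∈ V,
          (p ^ S.card * q ^ (V.card - S.card)) * (if v ∈ S then (1 : ℝ) else 0) := by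
        apply Finset.sum_congr rfl
        intro S hS
        rw [hcast S hS, Finset.mul_sum]
    _ = ∑ v ∈ V, ∑ S ∈ V.powerset,
          (p ^ S.card * q ^ (V.card - S.card)) * (if v ∈ S then (1 : ℝ) else 0) :=
        Finset.sum_comm
    _ = ∑ v ∈ V, p := by
        apply Finset.sum_congr rfl
        intro v hv
        have hTV : ({v} : Finset (ℕ × ℝ)) ⊆ V := Finset.singleton_subset_iff.2 hv
        calc ∑ S ∈ V.powerset, (p ^ S.card * q ^ (V.card - S.card)) *
              (if v ∈ S then (1 : ℝ) else 0)
            = ∑ S ∈ V.powerset,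
              (if ({v} : Finset (ℕ × ℝ)) ⊆ S then p ^ S.card * q ^ (V.card - S.card) else 0) := by
              apply Finset.sum_congr rfl
              intro S _
              by_cases hcond : v ∈ S
              · rw [if_pos hcond, if_pos (Finset.singleton_subset_iff.2 hcond), mul_one]
              · rw [if_neg hcond, if_neg (fun h => hcond (Finset.singleton_subset_iff.1 h)),
                  mul_zero]
          _ = p ^ ({v} : Finset (ℕ × ℝ)).card := subsetw p q hpq V {v} hTV
          _ = p := by rw [Finset.card_singleton, pow_one]
    _ = (V.card : ℝ) * p := by rw [Finset.sum_const, nsmul_eq_mul]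

lemma sumX (p q : ℝ) (hpq : p + q = 1) :
    ∑ S ∈ (Vfin k c Λ).powerset,
      (p ^ S.card * q ^ ((Vfin k c Λ).card - S.card)) * (XCount k c Λ S : ℝ)
      = (Xtot k c Λ : ℝ) * p ^ 4 := by
  set V := Vfin k c Λ with hV
  have hcast : ∀ S : Finset (ℕ × ℝ), ((XCount k c Λ S : ℕ) : ℝ) =
      ∑ i ∈ Finset.range (k - 1), ∑ z ∈ Λ ×ˢ Λ,
        (if ((ycd c z.1 i - ycd c z.2 i) * (ycd c z.1 (i + 1) - ycd c z.2 (i + 1)) < 0) ∧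
          (i, ycd c z.1 i) ∈ S ∧ (i, ycd c z.2 i) ∈ S ∧
          (i + 1, ycd c z.1 (i + 1)) ∈ S ∧ (i + 1, ycd c z.2 (i + 1)) ∈ S
          then (1 : ℝ) else 0) := by
    intro S
    simp only [XCount, Finset.card_filter]
    push_cast
    rfl
  calc ∑ S ∈ V.powerset, (p ^ S.card * q ^ (V.card - S.card)) * (XCount k c Λ S : ℝ)
      = ∑ S ∈ V.powerset, ∑ i ∈ Finset.range (k - 1), ∑ z ∈ Λ ×ˢ Λ,
          (p ^ S.card * q ^ (V.card - S.card)) *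
          (if ((ycd c z.1 i - ycd c z.2 i) * (ycd c z.1 (i + 1) - ycd c z.2 (i + 1)) < 0) ∧
            (i, ycd c z.1 i) ∈ S ∧ (i, ycd c z.2 i) ∈ S ∧
            (i + 1, ycd c z.1 (i + 1)) ∈ S ∧ (i + 1, ycd c z.2 (i + 1)) ∈ S
            then (1 : ℝ) else 0) := by
        apply Finset.sum_congr rfl
        intro S _
        rw [hcast, Finset.mul_sum]
        exact Finset.sum_congr rfl fun i _ => by rw [Finset.mul_sum]
    _ = ∑ i ∈ Finset.range (k - 1), ∑ z ∈ Λ ×ˢ Λ, ∑ S ∈ V.powerset,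
          (p ^ S.card * q ^ (V.card - S.card)) *
          (if ((ycd c z.1 i - ycd c z.2 i) * (ycd c z.1 (i + 1) - ycd c z.2 (i + 1)) < 0) ∧
            (i, ycd c z.1 i) ∈ S ∧ (i, ycd c z.2 i) ∈ S ∧
            (i + 1, ycd c z.1 (i + 1)) ∈ S ∧ (i + 1, ycd c z.2 (i + 1)) ∈ S
            then (1 : ℝ) else 0) := by
        rw [Finset.sum_comm]
        exact Finset.sum_congr rfl fun i _ => Finset.sum_comm
    _ = ∑ i ∈ Finset.range (k - 1), ∑ z ∈ Λ ×ˢ Λ,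
          (if (ycd c z.1 i - ycd c z.2 i) * (ycd c z.1 (i + 1) - ycd c z.2 (i + 1)) < 0
            then p ^ 4 else 0) := by
        apply Finset.sum_congr rfl
        intro i hi
        apply Finset.sum_congr rfl
        intro z hz
        simp only [Finset.mem_range] at hi
        simp only [Finset.mem_product] at hz
        by_cases hcr : (ycd c z.1 i - ycd c z.2 i) * (ycd c z.1 (i + 1) - ycd c z.2 (i + 1)) < 0
        · rw [if_pos hcr]
          set T : Finset (ℕ × ℝ) := insert (i, ycd c z.1 i) (insert (i, ycd c z.2 i)
            (insert (i + 1, ycd c z.1 (i + 1)) {(i + 1, ycd c z.2 (i + 1))})) with hT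
          have hne1 : ycd c z.1 i ≠ ycd c z.2 i := by
            intro h; rw [h] at hcr; simp at hcr
          have hne2 : ycd c z.1 (i + 1) ≠ ycd c z.2 (i + 1) := by
            intro h; rw [h] at hcr; simp at hcr
          have hTV : T ⊆ V := by
            intro v hv
            simp only [hT, Finset.mem_insert, Finset.mem_singleton] at hv
            rcases hv with rfl | rfl | rfl | rfl
            · exact mem_Vfin k c Λ hz.1 (by omega)
            · exact mem_Vfin k c Λ hz.2 (by omega)
            · exact mem_Vfin k c Λ hz.1 (by omega)
            · exact mem_Vfin k c Λ hz.2 (by omega)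
          have hTcard : T.card = 4 := by
            rw [hT]
            rw [Finset.card_insert_of_notMem, Finset.card_insert_of_notMem,
              Finset.card_insert_of_notMem, Finset.card_singleton]
            · simp only [Finset.mem_singleton, Prod.mk.injEq]
              intro h; exact hne2 h.2
            · simp only [Finset.mem_insert, Finset.mem_singleton, Prod.mk.injEq]
              rintro (⟨h, -⟩ | ⟨h, -⟩) <;> omega
            · simp only [Finset.mem_insert, Finset.mem_singleton, Prod.mk.injEq]
              rintro (⟨-, h⟩ | ⟨h, -⟩ | ⟨h, -⟩)
              · exact hne1 h
              · omega
              · omega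
          have hiff : ∀ S : Finset (ℕ × ℝ),
              ((i, ycd c z.1 i) ∈ S ∧ (i, ycd c z.2 i) ∈ S ∧
               (i + 1, ycd c z.1 (i + 1)) ∈ S ∧ (i + 1, ycd c z.2 (i + 1)) ∈ S) ↔ T ⊆ S := by
            intro S
            simp only [hT, Finset.insert_subset_iff, Finset.singleton_subset_iff]
          calc ∑ S ∈ V.powerset, (p ^ S.card * q ^ (V.card - S.card)) *
                (if ((ycd c z.1 i - ycd c z.2 i) *
                    (ycd c z.1 (i + 1) - ycd c z.2 (i + 1)) < 0) ∧
                  (i, ycd c z.1 i) ∈ S ∧ (i, ycd c z.2 i) ∈ S ∧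
                  (i + 1, ycd c z.1 (i + 1)) ∈ S ∧ (i + 1, ycd c z.2 (i + 1)) ∈ S
                  then (1 : ℝ) else 0)
              = ∑ S ∈ V.powerset,
                (if T ⊆ S then p ^ S.card * q ^ (V.card - S.card) else 0) := by
                apply Finset.sum_congr rfl
                intro S _
                by_cases hcond : (i, ycd c z.1 i) ∈ S ∧ (i, ycd c z.2 i) ∈ S ∧
                  (i + 1, ycd c z.1 (i + 1)) ∈ S ∧ (i + 1, ycd c z.2 (i + 1)) ∈ S
                · rw [if_pos ⟨hcr, hcond⟩, if_pos ((hiff S).1 hcond), mul_one]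
                · rw [if_neg (fun h => hcond h.2), if_neg (fun h => hcond ((hiff S).2 h)),
                    mul_zero]
            _ = p ^ T.card := subsetw p q hpq V T hTV
            _ = p ^ 4 := by rw [hTcard]
        · rw [if_neg hcr]
          apply Finset.sum_eq_zero
          intro S _
          rw [if_neg (fun h => hcr h.1), mul_zero]
    _ = (Xtot k c Λ : ℝ) * p ^ 4 := by
        simp only [Xtot]
        push_cast
        rw [Finset.sum_mul]
        apply Finset.sum_congr rfl
        intro i _
        rw [Finset.card_filter]
        push_cast
        rw [Finset.sum_mul]
        apply Finset.sum_congr rfl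
        intro z _
        by_cases hcr : (ycd c z.1 i - ycd c z.2 i) * (ycd c z.1 (i + 1) - ycd c z.2 (i + 1)) < 0
        · rw [if_pos hcr, if_pos hcr, one_mul]
        · rw [if_neg hcr, if_neg hcr, zero_mul]

lemma key2 (hc : ∀ i j, i < j → j < k → c i < c j) (p q : ℝ) (hp : 0 ≤ p) (hq : 0 ≤ q)
    (hpq : p + q = 1) :
    2 * (((k - 1) * Λ.card : ℕ) : ℝ) * p ^ 2 ≤
      4 * ((Vfin k c Λ).card : ℝ) * p + (Xtot k c Λ : ℝ) * p ^ 4 := by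
  set V := Vfin k c Λ with hV
  have hterm : ∀ S ∈ V.powerset,
      (p ^ S.card * q ^ (V.card - S.card)) * (2 * (ECount k c Λ S : ℝ)) ≤
      (p ^ S.card * q ^ (V.card - S.card)) * (4 * (S.card : ℝ) + (XCount k c Λ S : ℝ)) := by
    intro S _
    apply mul_le_mul_of_nonneg_left _ (by positivity)
    have := key1 k c Λ hc S
    push_cast
    exact_mod_cast this
  have hsum := Finset.sum_le_sum hterm
  have hL : ∑ S ∈ V.powerset, (p ^ S.card * q ^ (V.card - S.card)) * (2 * (ECount k c Λ S : ℝ))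
      = 2 * (((k - 1) * Λ.card : ℕ) : ℝ) * p ^ 2 := by
    rw [show (2 : ℝ) * (((k - 1) * Λ.card : ℕ) : ℝ) * p ^ 2
        = 2 * ((((k - 1) * Λ.card : ℕ) : ℝ) * p ^ 2) by ring]
    rw [← sumE k c Λ p q hpq, Finset.mul_sum]
    apply Finset.sum_congr rfl
    intro S _
    ring
  have hR : ∑ S ∈ V.powerset, (p ^ S.card * q ^ (V.card - S.card)) *
        (4 * (S.card : ℝ) + (XCount k c Λ S : ℝ))
      = 4 * ((V.card : ℕ) : ℝ) * p + (Xtot k c Λ : ℝ) * p ^ 4 := by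
    rw [show (4 : ℝ) * ((V.card : ℕ) : ℝ) * p = 4 * (((V.card : ℕ) : ℝ) * p) by ring]
    rw [← sumCard k c Λ p q hpq, ← sumX k c Λ p q hpq, Finset.mul_sum,
      ← Finset.sum_add_distrib]
    apply Finset.sum_congr rfl
    intro S _
    ring
  rw [hL, hR] at hsum
  exact hsum

lemma xtot_le (hc : ∀ i j, i < j → j < k → c i < c j) :
    Xtot k c Λ ≤ Λ.card * Λ.card := by
  have huniq : ∀ z : (ℝ × ℝ) × (ℝ × ℝ),
      ((Finset.range (k - 1)).filter fun i =>
        (ycd c z.1 i - ycd c z.2 i) * (ycd c z.1 (i + 1) - ycd c z.2 (i + 1)) < 0).card ≤ 1 := by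
    intro z
    rw [Finset.card_le_one]
    intro i hi j hj
    simp only [Finset.mem_filter, Finset.mem_range] at hi hj
    obtain ⟨hik, hicr⟩ := hi
    obtain ⟨hjk, hjcr⟩ := hj
    set s := z.1.1 - z.2.1 with hs
    set b := z.1.2 - z.2.2 with hb
    have hyd : ∀ m : ℕ, ycd c z.1 m - ycd c z.2 m = s * c m + b := by
      intro m; simp only [ycd, hs, hb]; ring
    rw [hyd, hyd] at hicr hjcr
    have hsne : s ≠ 0 := by
      intro h
      rw [h] at hicr
      simp at hicr
      nlinarith
    set x0 := -b / s with hx0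
    have hform : ∀ m : ℕ, s * c m + b = s * (c m - x0) := by
      intro m
      have hsx : s * x0 = -b := by rw [hx0]; field_simp
      linear_combination hsx
    rw [hform, hform] at hicr hjcr
    have hroot : ∀ m : ℕ, m < k - 1 →
        (s * (c m - x0)) * (s * (c (m + 1) - x0)) < 0 → c m < x0 ∧ x0 < c (m + 1) := by
      intro m hm hcr2
      have hmono : c m < c (m + 1) := hc m (m + 1) (by omega) (by omega)
      have h2 : (c m - x0) * (c (m + 1) - x0) < 0 := by nlinarith [sq_nonneg s, mul_self_pos.2 hsne]
      rcases mul_neg_iff.1 h2 with ⟨h3, h4⟩ | ⟨h3, h4⟩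
      · nlinarith
      · constructor <;> nlinarith
    have hri := hroot i hik hicr
    have hrj := hroot j hjk hjcr
    by_contra hne
    rcases Nat.lt_or_ge i j with hij | hij
    · have : i + 1 ≤ j := hij
      have h5 : c (i + 1) ≤ c j := by
        rcases Nat.eq_or_lt_of_le this with h | h
        · rw [h]
        · exact le_of_lt (hc (i + 1) j h (by omega))
      linarith [hri.2, hrj.1]
    · have hji : j < i := by omega
      have : j + 1 ≤ i := hji
      have h5 : c (j + 1) ≤ c i := by
        rcases Nat.eq_or_lt_of_le this with h | h
        · rw [h]
        · exact le_of_lt (hc (j + 1) i h (by omega))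
      linarith [hri.1, hrj.2]
  calc Xtot k c Λ = ∑ i ∈ Finset.range (k - 1), ∑ z ∈ Λ ×ˢ Λ,
        (if (ycd c z.1 i - ycd c z.2 i) * (ycd c z.1 (i + 1) - ycd c z.2 (i + 1)) < 0
          then 1 else 0) := by
        simp only [Xtot]
        exact Finset.sum_congr rfl fun i _ => Finset.card_filter _ _
    _ = ∑ z ∈ Λ ×ˢ Λ, ∑ i ∈ Finset.range (k - 1),
        (if (ycd c z.1 i - ycd c z.2 i) * (ycd c z.1 (i + 1) - ycd c z.2 (i + 1)) < 0
          then 1 else 0) := Finset.sum_comm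
    _ ≤ ∑ z ∈ Λ ×ˢ Λ, 1 := by
        apply Finset.sum_le_sum
        intro z _
        rw [← Finset.card_filter]
        exact huniq z
    _ = Λ.card * Λ.card := by rw [Finset.sum_const, Finset.card_product, smul_eq_mul, mul_one]

theorem core (hc : ∀ i j, i < j → j < k → c i < c j) :
    (k - 1) * Λ.card ≤ 4 * (Vfin k c Λ).card ∨
    (k - 1) ^ 3 * Λ.card ≤ 16 * (Vfin k c Λ).card ^ 2 := by
  rcases le_or_gt ((k - 1) * Λ.card) (4 * (Vfin k c Λ).card) with hsmall | hsmall
  · exact Or.inl hsmall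
  right
  set nN := (Vfin k c Λ).card with hnN
  set LN := Λ.card with hLN
  set eN := (k - 1) * LN with heN
  -- basic positivity
  have heNpos : 0 < eN := lt_of_le_of_lt (Nat.zero_le _) hsmall
  have hLpos : 0 < LN := by
    rcases Nat.eq_zero_or_pos LN with h | h
    · exfalso; rw [heN, h, Nat.mul_zero] at heNpos; exact Nat.lt_irrefl _ heNpos
    · exact h
  have hk2 : 2 ≤ k := by
    by_contra h
    push_neg at h
    have hk1 : k - 1 = 0 := by omega
    rw [heN, hk1, Nat.zero_mul] at heNpos
    exact Nat.lt_irrefl _ heNpos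
  have hnpos : 0 < nN := by
    obtain ⟨l, hl⟩ := Finset.card_pos.1 hLpos
    have : (0, ycd c l 0) ∈ Vfin k c Λ := mem_Vfin k c Λ hl (by omega)
    exact Finset.card_pos.2 ⟨_, this⟩
  set e : ℝ := (eN : ℝ) with he
  set n : ℝ := (nN : ℝ) with hn
  set L : ℝ := (LN : ℝ) with hL
  have hepos : (0:ℝ) < e := by rw [he]; exact_mod_cast heNpos
  have hnpos' : (0:ℝ) < n := by rw [hn]; exact_mod_cast hnpos
  have hbig : 4 * n < e := by rw [hn, he]; exact_mod_cast hsmall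
  set p : ℝ := 4 * n / e with hp
  have hppos : 0 < p := by positivity
  have hplt : p < 1 := by rw [hp, div_lt_one hepos]; linarith
  have h2 := key2 k c Λ hc p (1 - p) (le_of_lt hppos) (by linarith) (by ring)
  have hXle : (Xtot k c Λ : ℝ) ≤ L * L := by rw [hL]; exact_mod_cast xtot_le k c Λ hc
  have hcast : (((k - 1) * Λ.card : ℕ) : ℝ) = e := by rw [he, heN, hLN]
  rw [hcast] at h2
  have h3 : 2 * e * p ^ 2 ≤ 4 * n * p + (L * L) * p ^ 4 := by
    refine h2.trans ?_
    have : (Xtot k c Λ : ℝ) * p ^ 4 ≤ (L * L) * p ^ 4 := by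
      apply mul_le_mul_of_nonneg_right hXle (pow_nonneg hppos.le 4)
    linarith
  -- substitute p = 4n/e and clear denominators
  have h4 : e ^ 3 ≤ 16 * n ^ 2 * (L * L) := by
    have hpe : p * e = 4 * n := by rw [hp]; field_simp
    have h5 : 2 * e * p ^ 2 * e ^ 3 ≤ (4 * n * p + (L * L) * p ^ 4) * e ^ 3 := by
      apply mul_le_mul_of_nonneg_right h3 (pow_nonneg hepos.le 3)
    have hexp : 2 * e * p ^ 2 * e ^ 3 = 2 * (p * e) ^ 2 * e ^ 2 := by ring
    have hexp2 : (4 * n * p + (L * L) * p ^ 4) * e ^ 3 =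
        4 * n * (p * e) * e ^ 2 + (L * L) * (p * e) ^ 4 / e := by
      field_simp
    rw [hexp, hexp2, hpe] at h5
    -- h5 : 2 * (4n)^2 * e^2 ≤ 4n * 4n * e^2 + L^2 (4n)^4 / e
    have h6 : 16 * n ^ 2 * e ^ 2 ≤ (L * L) * (4 * n) ^ 4 / e := by nlinarith
    have h7 : 16 * n ^ 2 * e ^ 3 ≤ (L * L) * (4 * n) ^ 4 := by
      calc 16 * n ^ 2 * e ^ 3 = (16 * n ^ 2 * e ^ 2) * e := by ring
        _ ≤ ((L * L) * (4 * n) ^ 4 / e) * e :=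
            mul_le_mul_of_nonneg_right h6 (le_of_lt hepos)
        _ = (L * L) * (4 * n) ^ 4 := by field_simp
    have hpos16 : (0:ℝ) < 16 * n ^ 2 := by have := pow_pos hnpos' 2; linarith
    have h9 : 16 * n ^ 2 * e ^ 3 ≤ 16 * n ^ 2 * (16 * n ^ 2 * (L * L)) := by
      calc 16 * n ^ 2 * e ^ 3 ≤ (L * L) * (4 * n) ^ 4 := h7
        _ = 16 * n ^ 2 * (16 * n ^ 2 * (L * L)) := by ring
    exact le_of_mul_le_mul_left h9 hpos16
  -- e = (k-1) L, so (k-1)^3 L^3 ≤ 16 n^2 L^2, divide by L^2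
  have hLpos' : (0:ℝ) < L := by rw [hL]; exact_mod_cast hLpos
  have h8 : ((k:ℝ) - 1) ^ 3 * L ≤ 16 * n ^ 2 := by
    have hee : e = ((k:ℝ) - 1) * L := by
      rw [he, heN]; push_cast [Nat.cast_sub (by omega : 1 ≤ k)]; ring
    rw [hee] at h4
    have := mul_le_mul_of_nonneg_right h4 (le_of_lt (one_div_pos.2 (pow_pos hLpos' 2) : (0:ℝ) < 1 / L ^ 2))
    calc ((k:ℝ) - 1) ^ 3 * L = (((k:ℝ) - 1) * L) ^ 3 * (1 / L ^ 2) := by field_simp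
      _ ≤ 16 * n ^ 2 * (L * L) * (1 / L ^ 2) := this
      _ = 16 * n ^ 2 := by field_simp
  have hfin : (((k - 1) ^ 3 * Λ.card : ℕ) : ℝ) ≤ ((16 * (Vfin k c Λ).card ^ 2 : ℕ) : ℝ) := by
    push_cast [Nat.cast_sub (by omega : 1 ≤ k)]
    calc (((k:ℝ) - 1)) ^ 3 * (Λ.card : ℝ) ≤ 16 * n ^ 2 := h8
      _ = 16 * ((Vfin k c Λ).card : ℝ) ^ 2 := by rw [hn, hnN]
  exact_mod_cast hfin

end STCore

namespace STGeom

def phi (u : Pt) (x : Pt) : ℝ := u.2 * x.1 - u.1 * x.2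
def psi (u : Pt) (x : Pt) : ℝ := u.1 * x.1 + u.2 * x.2

lemma Dpos {u : Pt} (hu : u ≠ 0) : 0 < u.1 ^ 2 + u.2 ^ 2 := by
  rcases eq_or_ne u.1 0 with h1 | h1
  · have h2 : u.2 ≠ 0 := fun h2 => hu (Prod.ext h1 h2)
    positivity
  · positivity

lemma phipsi_inj {u : Pt} (hu : u ≠ 0) {x y : Pt}
    (h1 : phi u x = phi u y) (h2 : psi u x = psi u y) : x = y := by
  have hD := Dpos hu
  simp only [phi, psi] at h1 h2
  have h3 : (u.1 ^ 2 + u.2 ^ 2) * (x.1 - y.1) = 0 := by linear_combination u.2 * h1 + u.1 * h2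
  have h4 : (u.1 ^ 2 + u.2 ^ 2) * (x.2 - y.2) = 0 := by
    linear_combination (-u.1) * h1 + u.2 * h2
  have hx1 : x.1 = y.1 := by
    rcases mul_eq_zero.1 h3 with h | h
    · nlinarith
    · linarith [sub_eq_zero.1 h]
  have hx2 : x.2 = y.2 := by
    rcases mul_eq_zero.1 h4 with h | h
    · nlinarith
    · linarith [sub_eq_zero.1 h]
  exact Prod.ext hx1 hx2

lemma phipsi_surj {u : Pt} (hu : u ≠ 0) (w : ℝ × ℝ) :
    ∃ x : Pt, phi u x = w.1 ∧ psi u x = w.2 := by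
  have hD := Dpos hu
  refine ⟨((u.2 * w.1 + u.1 * w.2) / (u.1 ^ 2 + u.2 ^ 2),
           (-u.1 * w.1 + u.2 * w.2) / (u.1 ^ 2 + u.2 ^ 2)), ?_, ?_⟩
  · simp only [phi]; field_simp; ring
  · simp only [psi]; field_simp; ring

lemma phi_smul (u : Pt) (a : ℝ) (v : Pt) : phi u (a • v) = a * phi u v := by
  simp only [phi, Prod.smul_fst, Prod.smul_snd, smul_eq_mul]; ring

lemma phi_ker {u : Pt} (hu : u ≠ 0) (v : Pt) :
    phi u v = 0 ↔ v ∈ Submodule.span ℝ {u} := by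
  constructor
  · intro h
    rw [Submodule.mem_span_singleton]
    simp only [phi] at h
    rcases eq_or_ne u.1 0 with h1 | h1
    · have h2 : u.2 ≠ 0 := fun h2 => hu (Prod.ext h1 h2)
      have hv1 : v.1 = 0 := by
        rw [h1] at h
        simp at h
        rcases h with h | h
        · exact absurd h h2
        · exact h
      refine ⟨v.2 / u.2, ?_⟩
      apply Prod.ext
      · simp [Prod.smul_fst, smul_eq_mul, h1, hv1]
      · simp [Prod.smul_snd, smul_eq_mul]
        field_simp
    · refine ⟨v.1 / u.1, ?_⟩
      apply Prod.ext
      · simp [Prod.smul_fst, smul_eq_mul]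
        field_simp
      · simp [Prod.smul_snd, smul_eq_mul]
        field_simp
        nlinarith [h]
  · intro h
    rw [Submodule.mem_span_singleton] at h
    obtain ⟨a, rfl⟩ := h
    rw [phi_smul]
    have h0 : phi u u = 0 := by simp only [phi]; ring
    rw [h0, mul_zero]

lemma span_of_isLine (l : Ln) (h : IsLine l) :
    ∃ v : Pt, v ≠ 0 ∧ l.direction = Submodule.span ℝ {v} := by
  have h1 : l.direction ≠ ⊥ := by
    intro hb
    rw [IsLine, hb, finrank_bot] at h
    exact absurd h (by norm_num)
  obtain ⟨v, hv, hvne⟩ := Submodule.ne_bot_iff _ |>.1 h1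
  refine ⟨v, hvne, ?_⟩
  refine (Submodule.eq_of_le_of_finrank_eq ?_ ?_).symm
  · rw [Submodule.span_le, Set.singleton_subset_iff]; exact hv
  · rw [finrank_span_singleton hvne, h]

lemma line_nonempty (l : Ln) (h : IsLine l) : (l : Set Pt).Nonempty := by
  rw [AffineSubspace.nonempty_iff_ne_bot]
  intro hb
  rw [IsLine, hb, AffineSubspace.direction_bot, finrank_bot] at h
  exact absurd h (by norm_num)

lemma vert_char {u : Pt} (hu : u ≠ 0) (l : Ln) (hl : IsLine l)
    (hdir : l.direction = Submodule.span ℝ {u}) :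
    ∃ a : ℝ, ∀ x : Pt, x ∈ l ↔ phi u x = a := by
  obtain ⟨p, hp⟩ := line_nonempty l hl
  refine ⟨phi u p, fun x => ?_⟩
  rw [← AffineSubspace.vsub_right_mem_direction_iff_mem hp x, hdir, ← phi_ker hu]
  have : x -ᵥ p = x - p := rfl
  rw [this]
  constructor
  · intro h
    have : phi u (x - p) = phi u x - phi u p := by simp [phi]; ring
    linarith [this ▸ h]
  · intro h
    have : phi u (x - p) = phi u x - phi u p := by simp [phi]; ring
    rw [this, h, sub_self]

lemma graph_char {u : Pt} (hu : u ≠ 0) (l : Ln) (hl : IsLine l)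
    (hnp : l.direction ≠ Submodule.span ℝ {u}) :
    ∃ sb : ℝ × ℝ, ∀ x : Pt, x ∈ l ↔ psi u x = sb.1 * phi u x + sb.2 := by
  obtain ⟨v, hv0, hvdir⟩ := span_of_isLine l hl
  have hφv : phi u v ≠ 0 := by
    intro h
    have hvs : v ∈ Submodule.span ℝ {u} := (phi_ker hu v).1 h
    have husv : (u : Pt) ∈ Submodule.span ℝ {v} := by
      rw [Submodule.mem_span_singleton] at hvs ⊢
      obtain ⟨a, ha⟩ := hvs
      have hane : a ≠ 0 := by
        intro h0; rw [h0, zero_smul] at ha; exact hv0 ha.symm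
      exact ⟨a⁻¹, by rw [← ha, smul_smul, inv_mul_cancel₀ hane, one_smul]⟩
    have hspan : Submodule.span ℝ {v} = Submodule.span ℝ {u} := by
      apply le_antisymm
      · rw [Submodule.span_le, Set.singleton_subset_iff]; exact hvs
      · rw [Submodule.span_le, Set.singleton_subset_iff]; exact husv
    exact hnp (hvdir.trans hspan)
  obtain ⟨p, hp⟩ := line_nonempty l hl
  set s := psi u v / phi u v with hs
  refine ⟨(s, psi u p - s * phi u p), fun x => ?_⟩
  simp only
  constructor
  · intro hx
    have hd : x -ᵥ p ∈ l.direction := AffineSubspace.vsub_mem_direction hx hp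
    rw [hvdir, Submodule.mem_span_singleton] at hd
    obtain ⟨t, ht⟩ := hd
    have hxp : x - p = t • v := ht.symm
    have hx1 : x.1 - p.1 = t * v.1 := by
      have := congrArg Prod.fst hxp; simpa using this
    have hx2 : x.2 - p.2 = t * v.2 := by
      have := congrArg Prod.snd hxp; simpa using this
    have hψ : psi u x - psi u p = t * psi u v := by
      simp only [psi]; linear_combination u.1 * hx1 + u.2 * hx2
    have hφ : phi u x - phi u p = t * phi u v := by
      simp only [phi]; linear_combination u.2 * hx1 - u.1 * hx2
    have hsv : s * phi u v = psi u v := by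
      rw [hs]; field_simp
    linear_combination hψ - s * hφ - t * hsv
  · intro hx
    set t := (phi u x - phi u p) / phi u v with htdef
    have hmem : t • v +ᵥ p ∈ l := by
      apply AffineSubspace.vadd_mem_of_mem_direction _ hp
      rw [hvdir]
      exact Submodule.smul_mem _ _ (Submodule.mem_span_singleton_self v)
    have hq : t • v +ᵥ p = t • v + p := rfl
    have hxeq : x = t • v + p := by
      apply phipsi_inj hu
      · have h1 : phi u (t • v + p) = t * phi u v + phi u p := by
          simp only [phi, Prod.smul_fst, Prod.smul_snd, smul_eq_mul, Prod.fst_add, Prod.snd_add]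
          ring
        rw [h1, htdef]
        field_simp
        ring
      · have h2 : psi u (t • v + p) = t * psi u v + psi u p := by
          simp only [psi, Prod.smul_fst, Prod.smul_snd, smul_eq_mul, Prod.fst_add, Prod.snd_add]
          ring
        rw [h2, hx, htdef, hs]
        field_simp
        ring
    rw [hxeq, ← hq]
    exact hmem

/-- the direction of a graphed line is determined by the slope -/
def wvec (u : Pt) (s : ℝ) : Pt :=
  ((u.2 + s * u.1) / (u.1 ^ 2 + u.2 ^ 2), (s * u.2 - u.1) / (u.1 ^ 2 + u.2 ^ 2))

lemma wvec_phi {u : Pt} (hu : u ≠ 0) (s : ℝ) : phi u (wvec u s) = 1 := by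
  have hD := Dpos hu
  simp only [phi, wvec]
  field_simp
  ring

lemma wvec_psi {u : Pt} (hu : u ≠ 0) (s : ℝ) : psi u (wvec u s) = s := by
  have hD := Dpos hu
  simp only [psi, wvec]
  field_simp
  ring

lemma dir_of_graph {u : Pt} (hu : u ≠ 0) (l : Ln) (hl : IsLine l) (sb : ℝ × ℝ)
    (hchar : ∀ x : Pt, x ∈ l ↔ psi u x = sb.1 * phi u x + sb.2) :
    l.direction = Submodule.span ℝ {wvec u sb.1} := by
  obtain ⟨p, hp⟩ := line_nonempty l hl
  have hw0 : wvec u sb.1 ≠ 0 := by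
    intro h
    have := wvec_phi hu sb.1
    rw [h] at this
    simp [phi] at this
  have hpw : wvec u sb.1 + p ∈ l := by
    rw [hchar]
    have h1 : phi u (wvec u sb.1 + p) = 1 + phi u p := by
      have := wvec_phi hu sb.1
      simp only [phi, Prod.fst_add, Prod.snd_add] at *
      linarith [this]
    have h2 : psi u (wvec u sb.1 + p) = sb.1 + psi u p := by
      have := wvec_psi hu sb.1
      simp only [psi, Prod.fst_add, Prod.snd_add] at *
      linarith [this]
    have h3 := (hchar p).1 hp
    rw [h1, h2, h3]
    ring
  have hwdir : wvec u sb.1 ∈ l.direction := by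
    have := AffineSubspace.vsub_mem_direction hpw hp
    have heq : (wvec u sb.1 + p) -ᵥ p = wvec u sb.1 := by
      have : (wvec u sb.1 + p) -ᵥ p = (wvec u sb.1 + p) - p := rfl
      rw [this]; ring
    rwa [heq] at this
  refine (Submodule.eq_of_le_of_finrank_eq ?_ ?_).symm
  · rw [Submodule.span_le, Set.singleton_subset_iff]; exact hwdir
  · rw [finrank_span_singleton hw0, hl]
end STGeom

lemma arithA {kR NR nR : ℝ} (hk : 2 ≤ kR) (hN : 4 ≤ NR)
    (hA : (kR - 1) * ((NR - 1) * kR) ≤ 4 * nR) : (1/16) * kR^2 * NR ≤ nR := by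
  nlinarith [mul_nonneg (sub_nonneg.2 hk) (sub_nonneg.2 hN), sq_nonneg kR, sq_nonneg NR]

lemma arithB {kR NR nR : ℝ} (hk : 2 ≤ kR) (hN : 4 ≤ NR) (hn : 0 ≤ nR)
    (hB : (kR - 1)^3 * ((NR - 1) * kR) ≤ 16 * nR^2) : kR^4 * NR / 256 ≤ nR^2 := by
  have hk2' : kR/2 ≤ kR - 1 := by linarith
  have hN2' : NR/2 ≤ NR - 1 := by linarith
  have hcube : (kR/2)^3 ≤ (kR - 1)^3 := by
    apply pow_le_pow_left₀ (by linarith) hk2'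
  have hstep : (kR/2)^3 * ((NR/2) * kR) ≤ (kR - 1)^3 * ((NR - 1) * kR) := by
    apply mul_le_mul hcube
    · apply mul_le_mul_of_nonneg_right hN2' (by linarith)
    · positivity
    · have hkm1 : (0:ℝ) ≤ kR - 1 := by linarith
      positivity
  nlinarith [hstep, hB]

theorem stmt_7 :
    ∃ c : ℝ, 0 < c ∧
      ∀ (N k : ℕ), 4 ≤ N → 2 ≤ k → ∀ F : ℕ → Set Ln,
        (∀ i, i < N → (∀ l ∈ F i, IsLine l)) →
        (∀ i, i < N → (F i).ncard = k) →
        (∀ i, i < N → ∀ l ∈ F i, ∀ l' ∈ F i,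
          AffineSubspace.direction l = AffineSubspace.direction l') →
        (∀ i j, i < N → j < N → i ≠ j → ∀ l ∈ F i, ∀ l' ∈ F j,
          AffineSubspace.direction l ≠ AffineSubspace.direction l') →
        c * (k : ℝ) ^ 2 * Real.sqrt N ≤
          (({x : Pt | ∃ j, 1 ≤ j ∧ j < N ∧ ∃ l ∈ F 0, ∃ l' ∈ F j, x ∈ l ∧ x ∈ l'}).ncard : ℝ) := by
  classical
  refine ⟨1/16, by norm_num, ?_⟩
  intro N k hN hk F hIsLine hcard hpar hnpar
  have h0N : 0 < N := by omega
  have hFfin : ∀ i, i < N → (F i).Finite := fun i hi =>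
    Set.finite_of_ncard_ne_zero (by rw [hcard i hi]; omega)
  have hF0ne : (F 0).Nonempty :=
    Set.nonempty_of_ncard_ne_zero (by rw [hcard 0 h0N]; omega)
  obtain ⟨l₀, hl₀⟩ := hF0ne
  obtain ⟨u, hu, hudir⟩ := STGeom.span_of_isLine l₀ (hIsLine 0 h0N l₀ hl₀)
  -- vertical (family 0) characterization
  have hvert : ∀ l : Ln, ∃ a : ℝ, l ∈ F 0 → ∀ x : Pt, x ∈ l ↔ STGeom.phi u x = a := by
    intro l
    by_cases hl : l ∈ F 0
    · obtain ⟨a, ha⟩ := STGeom.vert_char hu l (hIsLine 0 h0N l hl)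
        ((hpar 0 h0N l hl l₀ hl₀).trans hudir)
      exact ⟨a, fun _ => ha⟩
    · exact ⟨0, fun h => absurd h hl⟩
  choose aOf haOf using hvert
  -- graph characterization for the other families
  have hgr : ∀ l : Ln, ∃ sb : ℝ × ℝ, (∃ j, 1 ≤ j ∧ j < N ∧ l ∈ F j) →
      ∀ x : Pt, x ∈ l ↔ STGeom.psi u x = sb.1 * STGeom.phi u x + sb.2 := by
    intro l
    by_cases hl : ∃ j, 1 ≤ j ∧ j < N ∧ l ∈ F j
    · obtain ⟨j, hj1, hjN, hlj⟩ := hl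
      obtain ⟨sb, hsb⟩ := STGeom.graph_char hu l (hIsLine j hjN l hlj) (by
        rw [← hudir]
        exact hnpar j 0 hjN h0N (by omega) l hlj l₀ hl₀)
      exact ⟨sb, fun _ => hsb⟩
    · exact ⟨0, fun h => absurd h hl⟩
  choose sbOf hsbOf using hgr
  -- column values
  set F0fin : Finset Ln := (hFfin 0 h0N).toFinset with hF0fin
  have hF0card : F0fin.card = k := by
    rw [hF0fin, ← Set.ncard_eq_toFinset_card (F 0) (hFfin 0 h0N), hcard 0 h0N]
  have haInj : ∀ l ∈ F 0, ∀ l' ∈ F 0, aOf l = aOf l' → l = l' := by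
    intro l hl l' hl' heq
    apply SetLike.ext
    intro x
    rw [haOf l hl x, haOf l' hl' x, heq]
  set Colset : Finset ℝ := F0fin.image aOf with hColset
  have hColcard : Colset.card = k := by
    rw [hColset, Finset.card_image_of_injOn, hF0card]
    intro a ha b hb hab
    exact haInj a ((hFfin 0 h0N).mem_toFinset.1 ha) b ((hFfin 0 h0N).mem_toFinset.1 hb) hab
  set cfun : ℕ → ℝ :=
    fun i => if h : i < k then ((Colset.orderIsoOfFin hColcard) ⟨i, h⟩ : ℝ) else 0 with hcfun
  have hcmono : ∀ i j, i < j → j < k → cfun i < cfun j := by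
    intro i j hij hjk
    have hik : i < k := lt_trans hij hjk
    simp only [hcfun, dif_pos hik, dif_pos hjk]
    exact_mod_cast (Colset.orderIsoOfFin hColcard).strictMono
      (show (⟨i, hik⟩ : Fin k) < ⟨j, hjk⟩ from hij)
  have hcmem : ∀ i, ∀ h : i < k, cfun i ∈ Colset := by
    intro i h
    simp only [hcfun, dif_pos h]
    exact ((Colset.orderIsoOfFin hColcard) ⟨i, h⟩).2
  have hcsurj : ∀ a ∈ Colset, ∃ i, ∃ h : i < k, cfun i = a := by
    intro a ha
    obtain ⟨i, hi⟩ := (Colset.orderIsoOfFin hColcard).surjective ⟨a, ha⟩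
    refine ⟨i.1, i.2, ?_⟩
    simp only [hcfun, dif_pos i.2]
    rw [show (⟨i.1, i.2⟩ : Fin k) = i from rfl, hi]
  -- the lines of families 1..N-1
  set Gfin : ℕ → Finset Ln :=
    fun j => if h : 1 ≤ j ∧ j < N then (hFfin j h.2).toFinset else ∅ with hGfin
  set Ufin : Finset Ln := (Finset.range N).biUnion Gfin with hUfin
  have hUmem : ∀ l ∈ Ufin, ∃ j, 1 ≤ j ∧ j < N ∧ l ∈ F j := by
    intro l hl
    rw [hUfin, Finset.mem_biUnion] at hl
    obtain ⟨j, hjr, hlG⟩ := hl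
    by_cases h : 1 ≤ j ∧ j < N
    · rw [hGfin] at hlG
      simp only [dif_pos h] at hlG
      exact ⟨j, h.1, h.2, (hFfin j h.2).mem_toFinset.1 hlG⟩
    · rw [hGfin] at hlG
      simp only [dif_neg h] at hlG
      exact absurd hlG (Finset.notMem_empty l)
  have hUmem' : ∀ j, 1 ≤ j → j < N → ∀ l ∈ F j, l ∈ Ufin := by
    intro j hj1 hjN l hl
    rw [hUfin, Finset.mem_biUnion]
    refine ⟨j, Finset.mem_range.2 hjN, ?_⟩
    rw [hGfin]
    simp only [dif_pos (⟨hj1, hjN⟩ : 1 ≤ j ∧ j < N)]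
    exact (hFfin j hjN).mem_toFinset.2 hl
  have hUcard : Ufin.card = (N - 1) * k := by
    rw [hUfin, Finset.card_biUnion]
    · have hGc : ∀ j ∈ Finset.range N, (Gfin j).card = if 1 ≤ j then k else 0 := by
        intro j hj
        rw [Finset.mem_range] at hj
        by_cases h1 : 1 ≤ j
        · rw [if_pos h1, hGfin]
          simp only [dif_pos (⟨h1, hj⟩ : 1 ≤ j ∧ j < N)]
          rw [← Set.ncard_eq_toFinset_card (F j) (hFfin j hj), hcard j hj]
        · rw [if_neg h1, hGfin]
          simp only [dif_neg (fun hh : 1 ≤ j ∧ j < N => h1 hh.1)]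
          rfl
      rw [Finset.sum_congr rfl hGc, Finset.sum_ite, Finset.sum_const, Finset.sum_const,
        smul_eq_mul, smul_eq_mul, mul_zero, add_zero]
      have : (Finset.range N).filter (fun j => 1 ≤ j) = Finset.Ico 1 N := by
        ext j
        simp only [Finset.mem_filter, Finset.mem_range, Finset.mem_Ico]
        omega
      rw [this, Nat.card_Ico]
    · intro a ha b hb hab
      rw [Function.onFun, Finset.disjoint_left]
      intro l hla hlb
      by_cases h1 : 1 ≤ a ∧ a < N
      · by_cases h2 : 1 ≤ b ∧ b < N
        · rw [hGfin] at hla hlb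
          simp only [dif_pos h1] at hla
          simp only [dif_pos h2] at hlb
          exact (hnpar a b h1.2 h2.2 hab l ((hFfin a h1.2).mem_toFinset.1 hla) l
            ((hFfin b h2.2).mem_toFinset.1 hlb)) rfl
        · rw [hGfin] at hlb
          simp only [dif_neg h2] at hlb
          exact absurd hlb (Finset.notMem_empty l)
      · rw [hGfin] at hla
        simp only [dif_neg h1] at hla
        exact absurd hla (Finset.notMem_empty l)
  set Λ : Finset (ℝ × ℝ) := Ufin.image sbOf with hΛ
  have hsbInj : ∀ l ∈ Ufin, ∀ l' ∈ Ufin, sbOf l = sbOf l' → l = l' := by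
    intro l hl l' hl' heq
    apply SetLike.ext
    intro x
    rw [hsbOf l (hUmem l hl) x, hsbOf l' (hUmem l' hl') x, heq]
  have hΛcard : Λ.card = (N - 1) * k := by
    rw [hΛ, Finset.card_image_of_injOn (fun a ha b hb => hsbInj a ha b hb), hUcard]
  -- the point set
  set Pset : Set Pt :=
    {x : Pt | ∃ j, 1 ≤ j ∧ j < N ∧ ∃ l ∈ F 0, ∃ l' ∈ F j, x ∈ l ∧ x ∈ l'} with hPset
  set Vf : Finset (ℕ × ℝ) := STCore.Vfin k cfun Λ with hVf
  set W : Finset (ℝ × ℝ) := Vf.image (fun v => (cfun v.1, v.2)) with hW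
  have hVmem : ∀ v : ℕ × ℝ, v ∈ Vf ↔ v.1 < k ∧ ∃ sb ∈ Λ, STCore.ycd cfun sb v.1 = v.2 := by
    intro v
    rw [hVf, STCore.Vfin, Finset.mem_biUnion]
    constructor
    · rintro ⟨i, hir, him⟩
      obtain ⟨t, ht, hv⟩ := Finset.mem_image.1 him
      obtain ⟨sb, hsb, rfl⟩ := Finset.mem_image.1 ht
      rw [← hv]
      exact ⟨Finset.mem_range.1 hir, sb, hsb, rfl⟩
    · rintro ⟨hvk, sb, hsb, hy⟩
      refine ⟨v.1, Finset.mem_range.2 hvk, Finset.mem_image.2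
        ⟨v.2, ?_, rfl⟩⟩
      exact Finset.mem_image.2 ⟨sb, hsb, hy⟩
  -- the image of the point set under (φ, ψ) is W
  have hMW : (fun x : Pt => (STGeom.phi u x, STGeom.psi u x)) '' Pset = ↑W := by
    ext w
    constructor
    · rintro ⟨x, hx, rfl⟩
      obtain ⟨j, hj1, hjN, l, hl, l', hl', hxl, hxl'⟩ := hx
      have hφx : STGeom.phi u x = aOf l := (haOf l hl x).1 hxl
      have hl'U : l' ∈ Ufin := hUmem' j hj1 hjN l' hl'
      have hψx := (hsbOf l' ⟨j, hj1, hjN, hl'⟩ x).1 hxl'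
      have haC : aOf l ∈ Colset := Finset.mem_image.2 ⟨l, (hFfin 0 h0N).mem_toFinset.2 hl, rfl⟩
      obtain ⟨i, hik, hci⟩ := hcsurj (aOf l) haC
      have hsbΛ : sbOf l' ∈ Λ := Finset.mem_image.2 ⟨l', hl'U, rfl⟩
      refine Finset.mem_coe.2 (Finset.mem_image.2
        ⟨(i, STCore.ycd cfun (sbOf l') i), ?_, ?_⟩)
      · rw [hVmem]
        exact ⟨hik, sbOf l', hsbΛ, rfl⟩
      · apply Prod.ext
        · simpa using (hci.trans hφx.symm)
        · simp only [STCore.ycd]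
          rw [hψx, hφx, ← hci]
    · intro hw
      obtain ⟨v, hv, rfl⟩ := Finset.mem_image.1 (Finset.mem_coe.1 hw)
      obtain ⟨hvk, sb, hsbΛ, hyt⟩ := (hVmem v).1 hv
      obtain ⟨l', hl'U, rfl⟩ := Finset.mem_image.1 hsbΛ
      obtain ⟨j, hj1, hjN, hl'F⟩ := hUmem l' hl'U
      have hciC : cfun v.1 ∈ Colset := hcmem v.1 hvk
      obtain ⟨l, hlF0fin, hal⟩ := Finset.mem_image.1 hciC
      have hlF0 : l ∈ F 0 := (hFfin 0 h0N).mem_toFinset.1 hlF0fin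
      obtain ⟨x, hφ, hψ⟩ := STGeom.phipsi_surj hu (cfun v.1, v.2)
      refine ⟨x, ?_, ?_⟩
      · refine ⟨j, hj1, hjN, l, hlF0, l', hl'F, ?_, ?_⟩
        · rw [haOf l hlF0 x, hφ, ← hal]
        · rw [hsbOf l' ⟨j, hj1, hjN, hl'F⟩ x, hψ, hφ]
          rw [← hyt]
          rfl
      · apply Prod.ext
        · simpa using hφ
        · simpa using hψ
  -- cardinality transfer
  have hinjM : Function.Injective (fun x : Pt => (STGeom.phi u x, STGeom.psi u x)) := by
    intro a b hab
    exact STGeom.phipsi_inj hu (congrArg Prod.fst hab) (congrArg Prod.snd hab)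
  have hPcard : Pset.ncard = Vf.card := by
    have h1 : ((fun x : Pt => (STGeom.phi u x, STGeom.psi u x)) '' Pset).ncard = Pset.ncard :=
      Set.ncard_image_of_injective Pset hinjM
    rw [hMW] at h1
    rw [← h1, Set.ncard_coe_finset]
    rw [hW, Finset.card_image_of_injOn]
    intro v hv v' hv' heq
    have heq' : (cfun v.1, v.2) = (cfun v'.1, v'.2) := heq
    obtain ⟨h1', h2'⟩ := Prod.mk.inj heq'
    have hvk := ((hVmem v).1 hv).1
    have hv'k := ((hVmem v').1 hv').1
    have hfst : v.1 = v'.1 := by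
      by_contra hne
      rcases Nat.lt_or_ge v.1 v'.1 with h | h
      · exact absurd h1' (ne_of_lt (hcmono _ _ h hv'k))
      · have h' : v'.1 < v.1 := by omega
        exact absurd h1'.symm (ne_of_lt (hcmono _ _ h' hvk))
    exact Prod.ext hfst h2'
  -- apply the core combinatorial bound
  have hcore := STCore.core k cfun Λ hcmono
  rw [hΛcard, ← hVf] at hcore
  rw [hPcard]
  -- final numerics
  have hk1 : (1:ℕ) ≤ k := by omega
  have hN1 : (1:ℕ) ≤ N := by omega
  set nn := Vf.card with hnn
  have hkR : (2:ℝ) ≤ (k:ℝ) := by exact_mod_cast hk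
  have hNR : (4:ℝ) ≤ (N:ℝ) := by exact_mod_cast hN
  have hnR : (0:ℝ) ≤ (nn:ℝ) := Nat.cast_nonneg _
  have hsqN : Real.sqrt (N:ℝ) ^ 2 = (N:ℝ) := Real.sq_sqrt (by linarith)
  have hsqnn : (0:ℝ) ≤ Real.sqrt (N:ℝ) := Real.sqrt_nonneg _
  rcases hcore with hA | hB
  · -- (k-1) * ((N-1) * k) ≤ 4 * nn
    have hAR : ((k:ℝ) - 1) * (((N:ℝ) - 1) * (k:ℝ)) ≤ 4 * (nn:ℝ) := by
      have := hA
      have hcast : (((k - 1) * ((N - 1) * k) : ℕ) : ℝ)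
          = ((k:ℝ) - 1) * (((N:ℝ) - 1) * (k:ℝ)) := by
        push_cast [Nat.cast_sub hk1, Nat.cast_sub hN1]
        ring
      calc ((k:ℝ) - 1) * (((N:ℝ) - 1) * (k:ℝ)) = (((k - 1) * ((N - 1) * k) : ℕ) : ℝ) :=
            hcast.symm
        _ ≤ ((4 * nn : ℕ) : ℝ) := by exact_mod_cast this
        _ = 4 * (nn:ℝ) := by push_cast; ring
    have hsle : Real.sqrt (N:ℝ) ≤ (N:ℝ) := by
      rw [Real.sqrt_le_left (by linarith)]
      nlinarith
    calc (1/16) * (k:ℝ)^2 * Real.sqrt (N:ℝ) ≤ (1/16) * (k:ℝ)^2 * (N:ℝ) := by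
          apply mul_le_mul_of_nonneg_left hsle (by positivity)
      _ ≤ (nn:ℝ) := arithA hkR hNR hAR
  · -- (k-1)^3 * ((N-1)*k) ≤ 16 * nn^2
    have hBR : ((k:ℝ) - 1)^3 * (((N:ℝ) - 1) * (k:ℝ)) ≤ 16 * (nn:ℝ)^2 := by
      have := hB
      have hcast : (((k - 1) ^ 3 * ((N - 1) * k) : ℕ) : ℝ)
          = ((k:ℝ) - 1)^3 * (((N:ℝ) - 1) * (k:ℝ)) := by
        push_cast [Nat.cast_sub hk1, Nat.cast_sub hN1]
        ring
      calc ((k:ℝ) - 1)^3 * (((N:ℝ) - 1) * (k:ℝ)) = (((k - 1)^3 * ((N - 1) * k) : ℕ) : ℝ) :=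
            hcast.symm
        _ ≤ ((16 * nn^2 : ℕ) : ℝ) := by exact_mod_cast this
        _ = 16 * (nn:ℝ)^2 := by push_cast; ring
    have hsq : ((1/16) * (k:ℝ)^2 * Real.sqrt (N:ℝ))^2 ≤ (nn:ℝ)^2 := by
      have hval : ((1/16) * (k:ℝ)^2 * Real.sqrt (N:ℝ))^2 = (k:ℝ)^4 * (N:ℝ) / 256 := by
        rw [mul_pow, mul_pow, hsqN]
        ring
      rw [hval]
      exact arithB hkR hNR hnR hBR
    have hfin := Real.sqrt_le_sqrt hsq
    rwa [Real.sqrt_sq (by positivity), Real.sqrt_sq hnR] at hfin
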